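/- Let (X,p) be a TVS-cone metric space over a metrizable locally convex space E whose topology is generated by a countable family (q_k)_{k≥1} of seminorms. Define h : E → ℝ by h(u) = Σ_{k=1}^∞ 2^{−k}·q_k(u)/(1 + q_k(u)) and d_S : X × X → ℝ by d_S(x,y) = inf{h(u) : u ∈ P and p(x,y) ≤ u}. Then d_S is a metric on X: for all x, y, z ∈ X, 0 ≤ d_S(x,y) < ∞; d_S(x,y) = 0 if and only if x = y; d_S(x,y) = d_S(y,x); and d_S(x,y) ≤ d_S(x,z) + d_S(z,y). -/

import Mathlib

open Filter Topology

section Defs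

variable {E : Type*} [AddCommGroup E] [Module ℝ E] [TopologicalSpace E]

/-- `P` is a closed, pointed convex cone with nonempty interior in the TVS `E`. -/
structure IsTVSCone (P : Set E) : Prop where
  add_mem : ∀ ⦃a⦄, a ∈ P → ∀ ⦃b⦄, b ∈ P → a + b ∈ P
  smul_mem : ∀ (r : ℝ), 0 ≤ r → ∀ ⦃a⦄, a ∈ P → r • a ∈ P
  pointed : ∀ a, a ∈ P → -a ∈ P → a = 0
  isClosed : IsClosed P
  int_nonempty : (interior P).Nonempty

/-- `a ≤ b` with respect to the cone `P`. -/
def ConeLe (P : Set E) (a b : E) : Prop := b - a ∈ P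

/-- `a ≪ b` with respect to the cone `P`. -/
def ConeLt (P : Set E) (a b : E) : Prop := b - a ∈ interior P

/-- `p : X × X → E` is a TVS-cone metric over the cone `P`. -/
structure IsConeMetric (P : Set E) {X : Type*} (p : X → X → E) : Prop where
  nonneg : ∀ x y, ConeLe P 0 (p x y)
  eq_zero_iff : ∀ x y, p x y = 0 ↔ x = y
  symm : ∀ x y, p x y = p y x
  triangle : ∀ x y z, ConeLe P (p x y) (p x z + p z y)

/-- The sequence `x` cone-converges to `a`. -/
def ConeConverges (P : Set E) {X : Type*} (p : X → X → E) (x : ℕ → X) (a : X) : Prop :=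
  ∀ c, c ∈ interior P → ∃ N, ∀ n ≥ N, ConeLt P (p (x n) a) c

/-- The sequence `x` is cone-Cauchy. -/
def ConeCauchy (P : Set E) {X : Type*} (p : X → X → E) (x : ℕ → X) : Prop :=
  ∀ c, c ∈ interior P → ∃ N, ∀ n ≥ N, ∀ m ≥ N, ConeLt P (p (x n) (x m)) c

/-- `(X, p)` is cone-complete. -/
def ConeComplete (P : Set E) {X : Type*} (p : X → X → E) : Prop :=
  ∀ x : ℕ → X, ConeCauchy P p x → ∃ a, ConeConverges P p x a

/-- The nonlinear scalarization ξ_e(y) = inf {t : t • e - y ∈ P}. -/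
noncomputable def xiScal (P : Set E) (e y : E) : ℝ := sInf {t : ℝ | t • e - y ∈ P}

/-- The open ball `B(x, c) = {y : p x y ≪ c}`. -/
def coneBall (P : Set E) {X : Type*} (p : X → X → E) (x : X) (c : E) : Set X :=
  {y | ConeLt P (p x y) c}

/-- The cone metric topology `τ_p`, generated by the balls `B(x,c)`, `c ≫ 0`. -/
def coneTopology (P : Set E) {X : Type*} (p : X → X → E) : TopologicalSpace X :=
  TopologicalSpace.generateFrom {s | ∃ x c, c ∈ interior P ∧ s = coneBall P p x c}

end Defs

/-- `h(u) = Σ_{k=1}^∞ 2^{-k} q_k(u)/(1 + q_k(u))` (indexed by `k : ℕ`, weight `2^{-(k+1)}`). -/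
noncomputable def hFun {E : Type*} [AddCommGroup E] [Module ℝ E]
    (q : ℕ → Seminorm ℝ E) (u : E) : ℝ :=
  ∑' k : ℕ, (1 / 2 : ℝ) ^ (k + 1) * (q k u / (1 + q k u))

section Aux

lemma frac_mono : MonotoneOn (fun t : ℝ => t / (1 + t)) (Set.Ici 0) := by
  intro a ha b hb hab
  simp only [Set.mem_Ici] at ha hb
  have h1 : (0:ℝ) < 1 + a := by linarith
  have h2 : (0:ℝ) < 1 + b := by linarith
  rw [div_le_div_iff₀ h1 h2]
  nlinarith [mul_nonneg ha hb, mul_nonneg (mul_nonneg ha hb) (add_nonneg ha hb)]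

lemma frac_nonneg {t : ℝ} (ht : 0 ≤ t) : 0 ≤ t / (1 + t) :=
  div_nonneg ht (by linarith)

lemma frac_le_one {t : ℝ} (ht : 0 ≤ t) : t / (1 + t) ≤ 1 := by
  rw [div_le_one (by linarith)]; linarith

lemma frac_add_le {a b : ℝ} (ha : 0 ≤ a) (hb : 0 ≤ b) :
    (a + b) / (1 + (a + b)) ≤ a / (1 + a) + b / (1 + b) := by
  have h1 : (0:ℝ) < 1 + a := by linarith
  have h2 : (0:ℝ) < 1 + b := by linarith
  have h3 : (0:ℝ) < 1 + (a + b) := by linarith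
  rw [div_add_div _ _ (ne_of_gt h1) (ne_of_gt h2), div_le_div_iff₀ h3 (by positivity)]
  nlinarith [mul_nonneg ha hb, mul_nonneg (mul_nonneg ha hb) (add_nonneg ha hb)]

variable {E : Type*} [AddCommGroup E] [Module ℝ E] (q : ℕ → Seminorm ℝ E)

lemma hFun_summable (u : E) :
    Summable (fun k : ℕ => (1 / 2 : ℝ) ^ (k + 1) * (q k u / (1 + q k u))) := by
  apply Summable.of_nonneg_of_le
  · intro k
    exact mul_nonneg (by positivity) (frac_nonneg (apply_nonneg _ _))
  · intro k
    calc (1 / 2 : ℝ) ^ (k + 1) * (q k u / (1 + q k u))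
        ≤ (1 / 2 : ℝ) ^ (k + 1) * 1 := by
          exact mul_le_mul_of_nonneg_left (frac_le_one (apply_nonneg _ _)) (by positivity)
      _ = (1 / 2 : ℝ) ^ (k + 1) := mul_one _
  · exact (summable_geometric_of_lt_one (by norm_num) (by norm_num)).comp_injective
      (add_left_injective 1)

lemma hFun_nonneg (u : E) : 0 ≤ hFun q u :=
  tsum_nonneg fun k => mul_nonneg (by positivity) (frac_nonneg (apply_nonneg _ _))

lemma hFun_zero : hFun q 0 = 0 := by
  unfold hFun
  simp

lemma hFun_add_le (u v : E) : hFun q (u + v) ≤ hFun q u + hFun q v := by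
  unfold hFun
  rw [← Summable.tsum_add (hFun_summable q u) (hFun_summable q v)]
  apply Summable.tsum_le_tsum _ (hFun_summable q _)
  · exact (hFun_summable q u).add (hFun_summable q v)
  intro k
  rw [← mul_add]
  apply mul_le_mul_of_nonneg_left _ (by positivity)
  calc q k (u + v) / (1 + q k (u + v))
      ≤ (q k u + q k v) / (1 + (q k u + q k v)) := by
        apply frac_mono (Set.mem_Ici.2 (apply_nonneg _ _))
          (Set.mem_Ici.2 (by positivity)) (map_add_le_add _ _ _)
    _ ≤ q k u / (1 + q k u) + q k v / (1 + q k v) :=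
        frac_add_le (apply_nonneg _ _) (apply_nonneg _ _)

lemma le_hFun (u : E) (k : ℕ) :
    (1 / 2 : ℝ) ^ (k + 1) * (q k u / (1 + q k u)) ≤ hFun q u :=
  Summable.le_tsum (hFun_summable q u) k fun j _ =>
    mul_nonneg (by positivity) (frac_nonneg (apply_nonneg _ _))

end Aux

/-- `d_S(x,y) = inf {h(u) : u ∈ P, p x y ≤ u}`. -/
noncomputable def dS {E X : Type*} [AddCommGroup E] [Module ℝ E] [TopologicalSpace E]
    (q : ℕ → Seminorm ℝ E) (P : Set E) (p : X → X → E) (x y : X) : ℝ :=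
  sInf {r : ℝ | ∃ u ∈ P, ConeLe P (p x y) u ∧ r = hFun q u}

/-- over a metrizable locally convex space whose topology is generated by
countably many seminorms, `d_S` is a metric on `X`. -/
theorem stmt_12 {E X : Type*} [AddCommGroup E] [Module ℝ E] [TopologicalSpace E]
    [IsTopologicalAddGroup E] [ContinuousSMul ℝ E] [T2Space E] [Nonempty X]
    (q : ℕ → Seminorm ℝ E) (hq : WithSeminorms q)
    (P : Set E) (hP : IsTVSCone P) (p : X → X → E) (hp : IsConeMetric P p) :
    (∀ x y : X, 0 ≤ dS q P p x y) ∧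
    (∀ x y : X, dS q P p x y = 0 ↔ x = y) ∧
    (∀ x y : X, dS q P p x y = dS q P p y x) ∧
    (∀ x y z : X, dS q P p x y ≤ dS q P p x z + dS q P p z y) := by
  -- basic facts about the cone
  have h0P : (0:E) ∈ P := by
    obtain ⟨a, ha⟩ := hP.int_nonempty
    have : (0:ℝ) • a ∈ P := hP.smul_mem 0 le_rfl (interior_subset ha)
    simpa using this
  -- the defining set
  set S : X → X → Set ℝ := fun x y => {r : ℝ | ∃ u ∈ P, ConeLe P (p x y) u ∧ r = hFun q u}
    with hS
  have hpxy_mem : ∀ x y : X, p x y ∈ P := by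
    intro x y
    have := hp.nonneg x y
    simpa [ConeLe] using this
  have hSne : ∀ x y : X, (S x y).Nonempty := by
    intro x y
    exact ⟨hFun q (p x y), p x y, hpxy_mem x y, by simpa [ConeLe] using h0P, rfl⟩
  have hSbdd : ∀ x y : X, BddBelow (S x y) := by
    intro x y
    refine ⟨0, fun r hr => ?_⟩
    obtain ⟨u, _, _, rfl⟩ := hr
    exact hFun_nonneg q u
  have hnonneg : ∀ x y : X, 0 ≤ dS q P p x y := by
    intro x y
    exact le_csInf (hSne x y) fun r hr => by
      obtain ⟨u, _, _, rfl⟩ := hr; exact hFun_nonneg q u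
  refine ⟨hnonneg, ?_, ?_, ?_⟩
  · -- d = 0 iff x = y
    intro x y
    constructor
    · intro hd
      -- choose u n with hFun (u n) < 1/(n+1)
      have hchoice : ∀ n : ℕ, ∃ u ∈ P, ConeLe P (p x y) u ∧ hFun q u < 1 / (n + 1) := by
        intro n
        have hpos : (0:ℝ) < 1 / (n + 1) := by positivity
        have hlt : sInf (S x y) < 1 / (n + 1) := by
          rw [show sInf (S x y) = dS q P p x y from rfl, hd]; exact hpos
        obtain ⟨r, hrS, hr⟩ := exists_lt_of_csInf_lt (hSne x y) hlt
        obtain ⟨u, huP, hule, rfl⟩ := hrS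
        exact ⟨u, huP, hule, hr⟩
      choose u huP hule hub using hchoice
      -- u n → 0
      have htend : Tendsto u atTop (𝓝 (0:E)) := by
        rw [hq.tendsto_nhds u 0]
        intro k ε hε
        have hεfrac : 0 < (1/2:ℝ) ^ (k+1) * (ε / (1 + ε)) := by positivity
        -- eventually 1/(n+1) < that
        have hev : ∀ᶠ n : ℕ in atTop, 1 / ((n:ℝ) + 1) < (1/2:ℝ) ^ (k+1) * (ε / (1 + ε)) := by
          have := tendsto_one_div_add_atTop_nhds_zero_nat (𝕜 := ℝ)
          exact this.eventually_lt_const hεfrac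
        filter_upwards [hev] with n hn
        have h1 : (1/2:ℝ) ^ (k+1) * (q k (u n) / (1 + q k (u n))) ≤ hFun q (u n) :=
          le_hFun q (u n) k
        have h2 : (1/2:ℝ) ^ (k+1) * (q k (u n) / (1 + q k (u n)))
            < (1/2:ℝ) ^ (k+1) * (ε / (1 + ε)) := lt_of_le_of_lt h1 ((hub n).trans hn)
        have h3 : q k (u n) / (1 + q k (u n)) < ε / (1 + ε) :=
          lt_of_mul_lt_mul_left h2 (by positivity)
        rw [sub_zero]
        by_contra hcon
        push_neg at hcon
        have := frac_mono (Set.mem_Ici.2 hε.le) (Set.mem_Ici.2 (apply_nonneg _ _)) hcon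
        exact absurd (this.trans_lt h3) (lt_irrefl _)
      -- u n - p x y ∈ P, closed, so limit -(p x y) ∈ P
      have htend2 : Tendsto (fun n => u n - p x y) atTop (𝓝 (-(p x y))) := by
        simpa using htend.sub (tendsto_const_nhds (x := p x y))
      have hmem : -(p x y) ∈ P :=
        hP.isClosed.mem_of_tendsto htend2 (Eventually.of_forall fun n => hule n)
      have : p x y = 0 := hP.pointed _ (hpxy_mem x y) hmem
      exact (hp.eq_zero_iff x y).1 this
    · rintro rfl
      apply le_antisymm _ (hnonneg x x)
      have h0S : (0:ℝ) ∈ S x x := by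
        refine ⟨0, h0P, ?_, (hFun_zero q).symm⟩
        have : p x x = 0 := (hp.eq_zero_iff x x).2 rfl
        simpa [ConeLe, this] using h0P
      exact csInf_le (hSbdd x x) h0S
  · intro x y
    unfold dS
    rw [hp.symm x y]
  · intro x y z
    have key : ∀ a ∈ S x z, ∀ b ∈ S z y, dS q P p x y ≤ a + b := by
      rintro a ⟨u, huP, hu, rfl⟩ b ⟨v, hvP, hv, rfl⟩
      have huvP : u + v ∈ P := hP.add_mem huP hvP
      have hle : ConeLe P (p x y) (u + v) := by
        have h1 : (u + v) - p x y = ((u - p x z) + (v - p z y)) + ((p x z + p z y) - p x y) := by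
          abel
        rw [ConeLe, h1]
        exact hP.add_mem (hP.add_mem hu hv) (hp.triangle x y z)
      calc dS q P p x y ≤ hFun q (u + v) := csInf_le (hSbdd x y) ⟨u + v, huvP, hle, rfl⟩
        _ ≤ hFun q u + hFun q v := hFun_add_le q u v
    have h1 : ∀ b ∈ S z y, dS q P p x y - b ≤ dS q P p x z := by
      intro b hb
      exact le_csInf (hSne x z) fun a ha => by linarith [key a ha b hb]
    have h2 : dS q P p x y - dS q P p x z ≤ dS q P p z y :=
      le_csInf (hSne z y) fun b hb => by linarith [h1 b hb]
    linarith
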